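/- Let W ⊆ Y ⊆ X be closed subspaces of a real Banach space X. If Y has property-(HB) in X, then Y/W has property-(HB) in X/W. -/

import Mathlib

open NormedSpace Metric Set

namespace Paper

variable {X : Type*} [NormedAddCommGroup X] [NormedSpace ℝ X]

/-- The restriction of a continuous linear functional to a subspace. -/
noncomputable def restr (Y : Submodule ℝ X) (f : StrongDual ℝ X) : StrongDual ℝ ↥Y :=
  f.comp Y.subtypeL

/-- The annihilator `Y⊥` of a subspace `Y` in the dual. -/
def ann (Y : Submodule ℝ X) : Set (StrongDual ℝ X) := {f | ∀ y ∈ Y, f y = 0}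

/-- The set of norm-preserving (Hahn–Banach) extensions of `g : Y* ` to `X`. -/
def HB (Y : Submodule ℝ X) (g : StrongDual ℝ ↥Y) : Set (StrongDual ℝ X) :=
  {f | (∀ y : Y, f (y : X) = g y) ∧ ‖f‖ = ‖g‖}

/-- Best approximations to `x` from a set `A`. -/
def bestApprox {E : Type*} [NormedAddCommGroup E] (A : Set E) (x : E) : Set E :=
  {z ∈ A | ‖x - z‖ = infDist x A}

/-- Property-(U): every functional on `Y` has a unique norm-preserving extension to `X`. -/
def propU (Y : Submodule ℝ X) : Prop :=
  ∀ g : StrongDual ℝ ↥Y, ∃! f : StrongDual ℝ X, f ∈ HB Y g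

/-- `Y# `: the set of functionals whose norm equals the norm of their restriction to `Y`. -/
def sharp (Y : Submodule ℝ X) : Set (StrongDual ℝ X) := {f | ‖f‖ = ‖restr Y f‖}

/-- Property-(HB), stated via the decomposition `X* = Y# ⊕ Y⊥`. -/
def propHB (Y : Submodule ℝ X) : Prop :=
  (∀ f ∈ sharp Y, ∀ g ∈ sharp Y, f + g ∈ sharp Y) ∧
  (∀ (c : ℝ), ∀ f ∈ sharp Y, c • f ∈ sharp Y) ∧
  (∀ f : StrongDual ℝ X, ∃ g ∈ sharp Y, ∃ h ∈ ann Y, f = g + h) ∧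
  (∀ g ∈ sharp Y, ∀ h ∈ ann Y, h ≠ 0 → ‖g‖ < ‖g + h‖ ∧ ‖h‖ ≤ ‖g + h‖)

end Paper

open Paper

section MyAux

variable {X : Type*} [NormedAddCommGroup X] [NormedSpace ℝ X]

/-- The quotient map as a continuous linear map. -/
def mkQL (W : Submodule ℝ X) : X →L[ℝ] X ⧸ W :=
  ⟨W.mkQ, continuous_quot_mk⟩

@[simp] lemma mkQL_apply (W : Submodule ℝ X) (x : X) :
    mkQL W x = Submodule.Quotient.mk x := rfl

lemma Phi_inj (W : Submodule ℝ X) {f g : StrongDual ℝ (X ⧸ W)}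
    (h : f.comp (mkQL W) = g.comp (mkQL W)) : f = g := by
  ext z
  obtain ⟨m, rfl⟩ := Submodule.Quotient.mk_surjective W z
  exact ContinuousLinearMap.ext_iff.mp h m

lemma norm_comp_mkQL (W : Submodule ℝ X) (f : StrongDual ℝ (X ⧸ W)) :
    ‖f.comp (mkQL W)‖ = ‖f‖ := by
  refine le_antisymm (ContinuousLinearMap.opNorm_le_bound _ (norm_nonneg f) fun x => ?_)
    (ContinuousLinearMap.opNorm_le_bound _ (norm_nonneg _) fun z => ?_)
  · calc ‖f (mkQL W x)‖ ≤ ‖f‖ * ‖mkQL W x‖ := f.le_opNorm _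
      _ ≤ ‖f‖ * ‖x‖ := by
          gcongr
          exact Submodule.Quotient.norm_mk_le W x
  · set C := ‖f.comp (mkQL W)‖ with hC
    have hC0 : 0 ≤ C := norm_nonneg _
    refine le_of_forall_pos_le_add fun ε hε => ?_
    obtain ⟨m, hm, hmn⟩ := Submodule.Quotient.norm_mk_lt z
      (show (0:ℝ) < ε / (C + 1) by positivity)
    have h1 : ‖f z‖ ≤ C * ‖m‖ := by
      rw [← hm]
      exact (f.comp (mkQL W)).le_opNorm m
    have h2 : C * ‖m‖ ≤ C * (‖z‖ + ε / (C + 1)) := by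
      have := hmn.le
      nlinarith
    have h3 : C * (ε / (C + 1)) ≤ ε := by
      rw [div_eq_inv_mul]
      have : C * ((C+1)⁻¹ * ε) = (C / (C+1)) * ε := by ring
      rw [this]
      have hle : C / (C + 1) ≤ 1 := by
        rw [div_le_one (by linarith)]; linarith
      nlinarith
    nlinarith [h1, h2]

lemma norm_restr_comp (W Y : Submodule ℝ X) [IsClosed (W : Set X)] (hWY : W ≤ Y) (f : StrongDual ℝ (X ⧸ W)) :
    ‖restr Y (f.comp (mkQL W))‖ = ‖restr (Y.map W.mkQ) f‖ := by
  refine le_antisymm (ContinuousLinearMap.opNorm_le_bound _ (norm_nonneg (restr (Y.map W.mkQ) f)) fun y => ?_)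
    (ContinuousLinearMap.opNorm_le_bound _ (norm_nonneg (restr Y (f.comp (mkQL W)))) fun z => ?_)
  · have hmem : W.mkQ (y : X) ∈ Y.map W.mkQ := Submodule.mem_map_of_mem y.2
    have heq : restr Y (f.comp (mkQL W)) y
        = restr (Y.map W.mkQ) f ⟨W.mkQ (y : X), hmem⟩ := rfl
    rw [heq]
    calc ‖restr (Y.map W.mkQ) f ⟨W.mkQ (y : X), hmem⟩‖
        ≤ ‖restr (Y.map W.mkQ) f‖ * ‖(⟨W.mkQ (y : X), hmem⟩ : Y.map W.mkQ)‖ :=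
          (restr (Y.map W.mkQ) f).le_opNorm _
      _ ≤ ‖restr (Y.map W.mkQ) f‖ * ‖y‖ := by
          have hle : ‖(⟨W.mkQ (y : X), hmem⟩ : Y.map W.mkQ)‖ ≤ ‖y‖ :=
            Submodule.Quotient.norm_mk_le W (y : X)
          have h0 : (0:ℝ) ≤ ‖restr (Y.map W.mkQ) f‖ := norm_nonneg (restr (Y.map W.mkQ) f)
          nlinarith
  · set C := ‖restr Y (f.comp (mkQL W))‖ with hC
    have hC0 : 0 ≤ C := norm_nonneg (restr Y (f.comp (mkQL W)))
    refine le_of_forall_pos_le_add fun ε hε => ?_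
    obtain ⟨y, hyY, hy⟩ := z.2
    obtain ⟨m, hm, hmn⟩ := Submodule.Quotient.norm_mk_lt (z : X ⧸ W)
      (show (0:ℝ) < ε / (C + 1) by positivity)
    have hmY : m ∈ Y := by
      have hmy : m - y ∈ W := by
        rw [← Submodule.Quotient.eq]
        show (Submodule.Quotient.mk m : X ⧸ W) = Submodule.Quotient.mk y
        rw [hm]
        exact hy.symm
      have h4 := Y.add_mem (hWY hmy) hyY
      simpa using h4
    have h1 : ‖restr (Y.map W.mkQ) f z‖ ≤ C * ‖m‖ := by
      have : restr (Y.map W.mkQ) f z = restr Y (f.comp (mkQL W)) ⟨m, hmY⟩ := by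
        show f (z : X ⧸ W) = f (Submodule.Quotient.mk m)
        rw [hm]
      rw [this]
      exact (restr Y (f.comp (mkQL W))).le_opNorm _
    have h2 : C * ‖m‖ ≤ C * (‖(z : X ⧸ W)‖ + ε / (C + 1)) := by
      have := hmn.le
      nlinarith
    have h3 : C * (ε / (C + 1)) ≤ ε := by
      rw [div_eq_inv_mul]
      have : C * ((C+1)⁻¹ * ε) = (C / (C+1)) * ε := by ring
      rw [this]
      have hle : C / (C + 1) ≤ 1 := by
        rw [div_le_one (by linarith)]; linarith
      nlinarith
    have hz : ‖(z : X ⧸ W)‖ = ‖z‖ := rfl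
    nlinarith [h1, h2]

lemma exists_lift (W : Submodule ℝ X) [IsClosed (W : Set X)] (g : StrongDual ℝ X)
    (hg : ∀ w ∈ W, g w = 0) :
    ∃ g' : StrongDual ℝ (X ⧸ W), g'.comp (mkQL W) = g := by
  have hker : W ≤ LinearMap.ker (g : X →ₗ[ℝ] ℝ) := fun w hw => LinearMap.mem_ker.mpr (hg w hw)
  set L : X ⧸ W →ₗ[ℝ] ℝ := W.liftQ (g : X →ₗ[ℝ] ℝ) hker with hL
  have hb : ∀ z : X ⧸ W, ‖L z‖ ≤ (‖g‖ + 1) * ‖z‖ := by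
    intro z
    rcases eq_or_lt_of_le (norm_nonneg z) with h0 | h0
    · have hz : z = 0 := norm_eq_zero.mp h0.symm
      simp [hz]
    · obtain ⟨m, hm, hmn⟩ := Submodule.Quotient.norm_mk_lt z
        (show (0:ℝ) < ‖z‖ / (‖g‖ + 1) by positivity)
      have hLz : L z = g m := by rw [← hm]; rfl
      have h1 : ‖L z‖ ≤ ‖g‖ * ‖m‖ := by rw [hLz]; exact g.le_opNorm m
      have hg0 : (0:ℝ) ≤ ‖g‖ := norm_nonneg g
      have h2 : ‖g‖ * ‖m‖ ≤ ‖g‖ * (‖z‖ + ‖z‖ / (‖g‖ + 1)) := by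
        have := hmn.le
        nlinarith
      have h3 : ‖g‖ * (‖z‖ / (‖g‖ + 1)) ≤ ‖z‖ := by
        rw [mul_div_assoc'] at *
        rw [div_le_iff₀ (by linarith)]
        nlinarith
      nlinarith
  refine ⟨L.mkContinuous (‖g‖ + 1) hb, ?_⟩
  ext x
  rfl

end MyAux


/-- if `W ⊆ Y ⊆ X` are closed subspaces and `Y` has property-(HB) in `X`,
then `Y/W` has property-(HB) in `X/W`. -/
theorem stmt10 {X : Type*} [NormedAddCommGroup X] [NormedSpace ℝ X] [CompleteSpace X]
    (W Y : Submodule ℝ X) (hWY : W ≤ Y)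
    [IsClosed (W : Set X)] (hYc : IsClosed (Y : Set X))
    (hHB : propHB Y) :
    propHB (X := X ⧸ W) (Y.map W.mkQ) := by
  set Φ : StrongDual ℝ (X ⧸ W) → StrongDual ℝ X := fun f => f.comp (mkQL W) with hΦ
  have hinj : ∀ {f g : StrongDual ℝ (X ⧸ W)}, Φ f = Φ g → f = g := fun h => Phi_inj W h
  have hadd : ∀ f g : StrongDual ℝ (X ⧸ W), Φ (f + g) = Φ f + Φ g := fun f g => by
    ext x; rfl
  have hsmul : ∀ (c : ℝ) (f : StrongDual ℝ (X ⧸ W)), Φ (c • f) = c • Φ f := fun c f => by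
    ext x; rfl
  have hsharp : ∀ f : StrongDual ℝ (X ⧸ W), f ∈ sharp (Y.map W.mkQ) ↔ Φ f ∈ sharp Y := by
    intro f
    have e1 : ‖Φ f‖ = ‖f‖ := norm_comp_mkQL W f
    have e2 : ‖restr Y (Φ f)‖ = ‖restr (Y.map W.mkQ) f‖ := norm_restr_comp W Y hWY f
    constructor <;> intro h
    · show ‖Φ f‖ = ‖restr Y (Φ f)‖
      rw [e1, e2]; exact h
    · show ‖f‖ = ‖restr (Y.map W.mkQ) f‖
      rw [← e1, ← e2]; exact h
  have hann : ∀ f : StrongDual ℝ (X ⧸ W), f ∈ ann (Y.map W.mkQ) ↔ Φ f ∈ ann Y := by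
    intro f
    constructor <;> intro h
    · intro y hy
      exact h _ (Submodule.mem_map_of_mem hy)
    · rintro z ⟨y, hy, rfl⟩
      exact h y hy
  obtain ⟨hHB1, hHB2, hHB3, hHB4⟩ := hHB
  refine ⟨?_, ?_, ?_, ?_⟩
  · intro f hf g hg
    rw [hsharp] at hf hg ⊢
    rw [hadd]
    exact hHB1 _ hf _ hg
  · intro c f hf
    rw [hsharp] at hf ⊢
    rw [hsmul]
    exact hHB2 c _ hf
  · intro f
    obtain ⟨g, hg, h, hh, hdec⟩ := hHB3 (Φ f)
    have hΦfW : ∀ w ∈ W, Φ f w = 0 := by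
      intro w hw
      show f (Submodule.Quotient.mk w) = 0
      rw [(Submodule.Quotient.mk_eq_zero W).mpr hw, map_zero]
    have hhW : ∀ w ∈ W, h w = 0 := fun w hw => hh w (hWY hw)
    have hgW : ∀ w ∈ W, g w = 0 := by
      intro w hw
      have hgw : g w = Φ f w - h w := by rw [hdec]; simp
      rw [hgw, hΦfW w hw, hhW w hw, sub_zero]
    obtain ⟨g', hg'⟩ := exists_lift W g hgW
    obtain ⟨h', hh'⟩ := exists_lift W h hhW
    refine ⟨g', ?_, h', ?_, ?_⟩
    · rw [hsharp]
      show g'.comp (mkQL W) ∈ sharp Y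
      rw [hg']; exact hg
    · rw [hann]
      show h'.comp (mkQL W) ∈ ann Y
      rw [hh']; exact hh
    · apply hinj
      rw [hadd]
      show f.comp (mkQL W) = g'.comp (mkQL W) + h'.comp (mkQL W)
      rw [hg', hh']
      exact hdec
  · intro g hg h hh hne
    have hΦne : Φ h ≠ 0 := by
      intro hc
      apply hne
      apply hinj (g := 0)
      exact hc.trans (ContinuousLinearMap.zero_comp (mkQL W)).symm
    have hkey := hHB4 (Φ g) ((hsharp g).mp hg) (Φ h) ((hann h).mp hh) hΦne
    rw [← hadd] at hkey
    have e1 : ‖Φ g‖ = ‖g‖ := norm_comp_mkQL W g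
    have e2 : ‖Φ h‖ = ‖h‖ := norm_comp_mkQL W h
    have e3 : ‖Φ (g + h)‖ = ‖g + h‖ := norm_comp_mkQL W (g + h)
    constructor
    · rw [← e1, ← e3]; exact hkey.1
    · rw [← e2, ← e3]; exact hkey.2
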